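/- Let G be a finite group acting on a set X and Ω : G × G × X → ℝ_{>0} a positive generalized 2-cocycle (Ω(g,h,kx)Ω(gh,k,x) = Ω(g,hk,x)Ω(h,k,x)) which additionally satisfies Ω(g,h,x)·Ω(h⁻¹,g⁻¹,ghx) = 1 for all g,h ∈ G, x ∈ X. Then there exists χ : G × X → ℝ_{>0} with Ω(g,h,x) = χ(g,hx)χ(h,x)/χ(gh,x) and moreover χ(g,x)·χ(g⁻¹,gx) = 1 for all g ∈ G, x ∈ X. -/

import Mathlib

/-- A strictly positive generalized 2-cocycle satisfying `Ω·Ω̂ = 1` is a coboundary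
with a positive trivializer `χ` satisfying `χ·χ̂ = 1`. -/
theorem positive_hat_cocycle_is_coboundary
    {G : Type*} [Group G] [Fintype G] {X : Type*} [MulAction G X]
    (Ω : G → G → X → ℝ)
    (hpos : ∀ (g h : G) (x : X), 0 < Ω g h x)
    (hΩ : ∀ (g h k : G) (x : X),
      Ω g h (k • x) * Ω (g * h) k x = Ω g (h * k) x * Ω h k x)
    (hhat : ∀ (g h : G) (x : X), Ω g h x * Ω h⁻¹ g⁻¹ ((g * h) • x) = 1) :
    ∃ χ : G → X → ℝ, (∀ (g : G) (x : X), 0 < χ g x) ∧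
      (∀ (g h : G) (x : X), Ω g h x = χ g (h • x) * χ h x / χ (g * h) x) ∧
      (∀ (g : G) (x : X), χ g x * χ g⁻¹ (g • x) = 1) := by
  classical
  set n : ℝ := (Fintype.card G : ℝ) with hn
  have hnpos : (0 : ℝ) < n := by
    rw [hn]; exact_mod_cast Fintype.card_pos
  set c : G → G → X → ℝ := fun g h x => Real.log (Ω g h x) with hcdef
  have hc_co : ∀ (g h k : G) (x : X),
      c g h (k • x) + c (g * h) k x = c g (h * k) x + c h k x := by
    intro g h k x
    have := congrArg Real.log (hΩ g h k x)
    rwa [Real.log_mul (hpos _ _ _).ne' (hpos _ _ _).ne',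
         Real.log_mul (hpos _ _ _).ne' (hpos _ _ _).ne'] at this
  have hc_hat : ∀ (g h : G) (x : X), c g h x + c h⁻¹ g⁻¹ ((g * h) • x) = 0 := by
    intro g h x
    have := congrArg Real.log (hhat g h x)
    rwa [Real.log_mul (hpos _ _ _).ne' (hpos _ _ _).ne', Real.log_one] at this
  set b : G → X → ℝ := fun g x => (∑ k : G, (c k g x + c g k⁻¹ (k • x))) / (2 * n)
    with hbdef
  refine ⟨fun g x => Real.exp (b g x), fun g x => Real.exp_pos _, ?_, ?_⟩
  · intro g h x
    have R1 : ∑ k : G, c (k * g) h x = ∑ k : G, c k h x :=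
      Fintype.sum_equiv (Equiv.mulRight g) _ _ (fun k => rfl)
    have R2 : ∑ k : G, c g k⁻¹ (k • h • x) = ∑ k : G, c g (h * k⁻¹) (k • x) := by
      refine Fintype.sum_equiv (Equiv.mulRight h) _ _ (fun m => ?_)
      have h1 : h * ((Equiv.mulRight h) m)⁻¹ = m⁻¹ := by
        simp [Equiv.mulRight]
      have h2 : ((Equiv.mulRight h) m) • x = m • h • x := by
        simp [Equiv.mulRight, mul_smul]
      rw [h1, h2]
    have key : (∑ k : G, (c k g (h • x) + c g k⁻¹ (k • h • x)))
        + (∑ k : G, (c k h x + c h k⁻¹ (k • x)))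
        - (∑ k : G, (c k (g * h) x + c (g * h) k⁻¹ (k • x)))
        = 2 * n * c g h x := by
      rw [← Finset.sum_add_distrib, ← Finset.sum_sub_distrib]
      have e1 : ∀ k : G,
          (c k g (h • x) + c g k⁻¹ (k • h • x)) + (c k h x + c h k⁻¹ (k • x))
            - (c k (g * h) x + c (g * h) k⁻¹ (k • x))
          = 2 * c g h x + (c k h x - c (k * g) h x)
            + (c g k⁻¹ (k • h • x) - c g (h * k⁻¹) (k • x)) := by
        intro k
        have A := hc_co k g h x
        have B := hc_co g h k⁻¹ (k • x)
        rw [inv_smul_smul] at B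
        linarith
      rw [Finset.sum_congr rfl (fun k _ => e1 k)]
      rw [Finset.sum_add_distrib, Finset.sum_add_distrib,
          Finset.sum_sub_distrib, Finset.sum_sub_distrib, R1, R2]
      simp [hn]
      ring
    have hb : b g (h • x) + b h x - b (g * h) x = c g h x := by
      rw [hbdef]
      rw [← add_div, div_sub_div_same, key]
      field_simp
    rw [← Real.exp_add, ← Real.exp_sub, hb, hcdef, Real.exp_log (hpos g h x)]
  · intro g x
    rw [← Real.exp_add]
    have hz : b g x + b g⁻¹ (g • x) = 0 := by
      rw [hbdef]
      rw [← add_div]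
      rw [← Finset.sum_add_distrib]
      have e1 : ∀ k : G,
          (c k g x + c g k⁻¹ (k • x)) + (c k g⁻¹ (g • x) + c g⁻¹ k⁻¹ (k • g • x))
            = 0 := by
        intro k
        have H1 := hc_hat k g x
        rw [mul_smul] at H1
        have H2 := hc_hat g k⁻¹ (k • x)
        rw [inv_inv, smul_smul, inv_mul_cancel_right] at H2
        linarith
      rw [Finset.sum_congr rfl (fun k _ => e1 k)]
      simp
    rw [hz, Real.exp_zero]
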